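/- Let K be a finite field with |K| = q, let W be a K-vector space of finite dimension at least 2, and let m be a positive integer. There exists a nontrivial solution (U,V) of the isometry equation with tuples of length m if and only if m ≥ q + 1. -/

import Mathlib

open Finset
open scoped Classical

/-- The pair of tuples `(U, V)` is a solution of the isometry equation
`∑ i, (1/|V i|) • 1_{V i} = ∑ i, (1/|U i|) • 1_{U i}` as real-valued functions on `W`. -/
def IsometrySolution {K W : Type*} [Field K] [AddCommGroup W] [Module K W]
    {m : ℕ} (U V : Fin m → Submodule K W) : Prop :=
  ∀ w : W,
    ∑ i, ((Nat.card ↥(V i) : ℝ))⁻¹ * (if w ∈ V i then 1 else 0) =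
    ∑ i, ((Nat.card ↥(U i) : ℝ))⁻¹ * (if w ∈ U i then 1 else 0)

/-- Two tuples of subspaces are equivalent if one is a permutation of the other. -/
def TuplesEquiv {K W : Type*} [Field K] [AddCommGroup W] [Module K W]
    {m : ℕ} (U V : Fin m → Submodule K W) : Prop :=
  ∃ π : Equiv.Perm (Fin m), ∀ i, V i = U (π i)

set_option linter.unusedSectionVars false
set_option maxHeartbeats 1000000

section Aux
variable {K W : Type*} [Field K] [Fintype K] [AddCommGroup W] [Module K W]
    [FiniteDimensional K W]

noncomputable def trm (X : Submodule K W) (w : W) : ℝ :=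
  ((Nat.card ↥X : ℝ))⁻¹ * (if w ∈ X then 1 else 0)

noncomputable def Fm (A : Multiset (Submodule K W)) (w : W) : ℝ :=
  (A.map (fun X => trm X w)).sum

lemma card_pos' (X : Submodule K W) : 0 < (Nat.card ↥X : ℝ) := by
  have : Finite W := Module.finite_of_finite K
  have : 0 < Nat.card ↥X := Nat.card_pos
  exact_mod_cast this

lemma sum_trm [Fintype W] (X T : Submodule K W) :
    ∑ w : W, (if w ∈ T then trm X w else 0) =
      ((Nat.card ↥X : ℝ))⁻¹ * (Nat.card ↥(X ⊓ T) : ℝ) := by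
  have h : ∀ w : W, (if w ∈ T then trm X w else 0) =
      ((Nat.card ↥X : ℝ))⁻¹ * (if w ∈ X ⊓ T then 1 else 0) := by
    intro w
    by_cases h1 : w ∈ T <;> by_cases h2 : w ∈ X <;>
      simp [trm, Submodule.mem_inf, h1, h2]
  rw [Finset.sum_congr rfl (fun w _ => h w), ← Finset.mul_sum]
  congr 1
  rw [Finset.sum_boole]
  rw [Nat.card_eq_fintype_card, Fintype.card_subtype]

/-- weighted intersection count -/
noncomputable def wic (T X : Submodule K W) : ℝ :=
  ((Nat.card ↥X : ℝ))⁻¹ * (Nat.card ↥(X ⊓ T) : ℝ)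

lemma sum_Fm [Fintype W] (A : Multiset (Submodule K W)) (T : Submodule K W) :
    ∑ w : W, (if w ∈ T then Fm A w else 0) = (A.map (wic T)).sum := by
  induction A using Multiset.induction_on with
  | empty => simp [Fm]
  | cons X A ih =>
    have : ∀ w : W, (if w ∈ T then Fm (X ::ₘ A) w else 0) =
        (if w ∈ T then trm X w else 0) + (if w ∈ T then Fm A w else 0) := by
      intro w; by_cases h : w ∈ T <;> simp [Fm, h]
    rw [Finset.sum_congr rfl (fun w _ => this w), Finset.sum_add_distrib, ih,
      sum_trm, Multiset.map_cons, Multiset.sum_cons, wic]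

lemma wic_pos (T X : Submodule K W) : 0 < wic T X := by
  have h1 := card_pos' (K := K) (W := W) X
  have h2 := card_pos' (K := K) (W := W) (X ⊓ T)
  exact mul_pos (inv_pos.mpr h1) h2

lemma wic_self (T : Submodule K W) : wic T T = 1 := by
  have := card_pos' (K := K) (W := W) T
  simp [wic, inf_idem, inv_mul_cancel₀ (ne_of_gt this)]

lemma card_mul_le_of_lt {X Y : Submodule K W} (h : Y < X) :
    Fintype.card K * Nat.card ↥Y ≤ Nat.card ↥X := by
  have : Finite W := Module.finite_of_finite K
  obtain ⟨x, hxX, hxY⟩ := SetLike.exists_of_lt h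
  have hf : Function.Injective (fun p : ↥Y × K => (⟨p.1.1 + p.2 • x, by
      exact X.add_mem (h.le p.1.2) (X.smul_mem _ hxX)⟩ : ↥X)) := by
    rintro ⟨⟨y1, hy1⟩, c1⟩ ⟨⟨y2, hy2⟩, c2⟩ hxy
    simp only [Subtype.mk_eq_mk] at hxy
    have hc : c1 = c2 := by
      by_contra hc
      have : x = (c1 - c2)⁻¹ • ((c1 - c2) • x) := by
        rw [smul_smul, inv_mul_cancel₀ (sub_ne_zero.mpr hc), one_smul]
      have hmem : (c1 - c2) • x = y2 - y1 := by
        rw [sub_smul]; linear_combination (norm := module) hxy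
      exact hxY (this ▸ Y.smul_mem _ (hmem ▸ Y.sub_mem hy2 hy1))
    refine Prod.ext ?_ hc
    ext
    have : y1 = y2 := by
      have := hxy; rw [hc] at this
      exact add_right_cancel this
    simpa using this
  calc Fintype.card K * Nat.card ↥Y = Nat.card (↥Y × K) := by
        simp [Nat.card_prod, Nat.card_eq_fintype_card, mul_comm]
    _ ≤ Nat.card ↥X := Nat.card_le_card_of_injective _ hf

lemma wic_le {T X : Submodule K W} (h : ¬ X ≤ T) :
    wic T X ≤ ((Fintype.card K : ℝ))⁻¹ := by
  have hlt : X ⊓ T < X := lt_of_le_of_ne inf_le_left (fun he => h (he ▸ inf_le_right))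
  have hcard := card_mul_le_of_lt hlt
  have hq : (0:ℝ) < Fintype.card K := by positivity
  have hX := card_pos' (K := K) (W := W) X
  rw [wic, inv_mul_le_iff₀ hX, ← div_eq_mul_inv, le_div_iff₀ hq]
  calc (Nat.card ↥(X ⊓ T) : ℝ) * Fintype.card K = Fintype.card K * Nat.card ↥(X ⊓ T) := by ring
    _ ≤ Nat.card ↥X := by exact_mod_cast hcard

lemma core [Fintype W] {A B : Multiset (Submodule K W)}
    (hF : ∀ w, Fm A w = Fm B w) (hcard : Multiset.card A = Multiset.card B)
    (hq : Multiset.card B ≤ Fintype.card K)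
    (hd : ∀ X ∈ A, X ∉ B)
    {T : Submodule K W} (hT : T ∈ A) (hmin : ∀ X ∈ A + B, ¬ X < T) : False := by
  have hq2 : 2 ≤ Fintype.card K := Fintype.one_lt_card
  have hqpos : (0:ℝ) < Fintype.card K := by positivity
  have hsum : (A.map (wic T)).sum = (B.map (wic T)).sum := by
    rw [← sum_Fm, ← sum_Fm]
    exact Finset.sum_congr rfl fun w _ => by by_cases h : w ∈ T <;> simp [h, hF w]
  -- bound on B side
  have hBle : ∀ x ∈ B.map (wic T), x ≤ ((Fintype.card K : ℝ))⁻¹ := by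
    intro x hx
    obtain ⟨X, hXB, rfl⟩ := Multiset.mem_map.mp hx
    have hXT : ¬ X ≤ T := by
      intro hle
      rcases eq_or_lt_of_le hle with h | h
      · exact hd T hT (h ▸ hXB)
      · exact hmin X (Multiset.mem_add.mpr (Or.inr hXB)) h
    exact wic_le hXT
  have hB : (B.map (wic T)).sum ≤ (Multiset.card B : ℝ) * ((Fintype.card K : ℝ))⁻¹ := by
    have := Multiset.sum_le_card_nsmul (B.map (wic T)) _ hBle
    simpa [Multiset.card_map, nsmul_eq_mul] using this
  have hB1 : (B.map (wic T)).sum ≤ 1 := by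
    refine hB.trans ?_
    rw [← div_eq_mul_inv, div_le_one hqpos]
    exact_mod_cast hq
  -- A side
  have hA : A = T ::ₘ A.erase T := (Multiset.cons_erase hT).symm
  have hAsum : (A.map (wic T)).sum = 1 + ((A.erase T).map (wic T)).sum := by
    rw [hA]; simp [wic_self]
  by_cases hcase : A.erase T = 0
  · -- card A = 1
    have hcA : Multiset.card A = 1 := by
      rw [hA, Multiset.card_cons, hcase]; simp
    have hsum1 : (A.map (wic T)).sum = 1 := by rw [hAsum, hcase]; simp
    -- B has one element, so sum ≤ 1/q < 1
    have hcB : Multiset.card B = 1 := hcard ▸ hcA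
    have h1 : (B.map (wic T)).sum ≤ ((Multiset.card B : ℕ):ℝ) * ((Fintype.card K : ℝ))⁻¹ := hB
    rw [hcB] at h1
    have h2 : ((Fintype.card K:ℝ))⁻¹ < 1 := by
      rw [inv_lt_one_iff₀]; right; exact_mod_cast hq2
    simp only [Nat.cast_one, one_mul] at h1
    linarith
  · -- card A ≥ 2, strict
    obtain ⟨Y, hY⟩ := Multiset.exists_mem_of_ne_zero hcase
    have hpos : 0 < ((A.erase T).map (wic T)).sum := by
      have h1 : wic T Y ≤ ((A.erase T).map (wic T)).sum := by
        refine Multiset.single_le_sum ?_ _ (Multiset.mem_map_of_mem _ hY)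
        intro x hx
        obtain ⟨X, _, rfl⟩ := Multiset.mem_map.mp hx
        exact (wic_pos T X).le
      exact lt_of_lt_of_le (wic_pos T Y) h1
    have : (1:ℝ) < (A.map (wic T)).sum := by rw [hAsum]; linarith
    linarith [hsum ▸ this, hB1]

lemma multiset_eq [Fintype W] {A B : Multiset (Submodule K W)}
    (hF : ∀ w, Fm A w = Fm B w) (hcard : Multiset.card A = Multiset.card B)
    (hq : Multiset.card B ≤ Fintype.card K) : A = B := by
  set C := A ∩ B with hC
  set A' := A - C with hA'
  set B' := B - C with hB'
  have hCA : C ≤ A := Multiset.inter_le_left (s := A) (t := B)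
  have hCB : C ≤ B := Multiset.inter_le_right (s := A) (t := B)
  have hAeq : A' + C = A := tsub_add_cancel_of_le hCA
  have hBeq : B' + C = B := tsub_add_cancel_of_le hCB
  have hF' : ∀ w, Fm A' w = Fm B' w := by
    intro w
    have h1 : Fm A w = Fm A' w + Fm C w := by rw [← hAeq]; simp [Fm]
    have h2 : Fm B w = Fm B' w + Fm C w := by rw [← hBeq]; simp [Fm]
    have := hF w; rw [h1, h2] at this; linarith
  have hcA' : Multiset.card A' = Multiset.card A - Multiset.card C := by
    rw [hA', Multiset.card_sub hCA]
  have hcB' : Multiset.card B' = Multiset.card B - Multiset.card C := by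
    rw [hB', Multiset.card_sub hCB]
  have hcard' : Multiset.card A' = Multiset.card B' := by rw [hcA', hcB', hcard]
  have hq' : Multiset.card B' ≤ Fintype.card K := by
    refine le_trans ?_ hq
    rw [hcB']; omega
  have hd' : ∀ X ∈ A', X ∉ B' := by
    intro X hX hX2
    have h1 : Multiset.count X A' = Multiset.count X A - min (Multiset.count X A) (Multiset.count X B) := by
      rw [hA', Multiset.count_sub, hC, Multiset.count_inter]
    have h2 : Multiset.count X B' = Multiset.count X B - min (Multiset.count X A) (Multiset.count X B) := by
      rw [hB', Multiset.count_sub, hC, Multiset.count_inter]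
    have := Multiset.count_pos.mpr hX
    have := Multiset.count_pos.mpr hX2
    omega
  by_cases h0 : A' = 0
  · have hB0 : B' = 0 := by
      rw [← Multiset.card_eq_zero, ← hcard', h0]; simp
    have : A = C := by
      have := tsub_eq_zero_iff_le.mp (hA' ▸ h0)
      exact le_antisymm this hCA
    have hBC : B = C := by
      have := tsub_eq_zero_iff_le.mp (hB' ▸ hB0)
      exact le_antisymm this hCB
    rw [this, hBC]
  · obtain ⟨Y, hY⟩ := Multiset.exists_mem_of_ne_zero h0
    have hne : (A' + B').toFinset.Nonempty :=
      ⟨Y, Multiset.mem_toFinset.mpr (Multiset.mem_add.mpr (Or.inl hY))⟩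
    obtain ⟨T, hT⟩ := Finset.exists_minimal hne
    have hTmem := hT.1
    have hTmin : ∀ X ∈ (A' + B').toFinset, ¬ X < T := fun X hX => hT.not_lt hX
    have hmin : ∀ X ∈ A' + B', ¬ X < T := fun X hX =>
      hTmin X (Multiset.mem_toFinset.mpr hX)
    rcases Multiset.mem_add.mp (Multiset.mem_toFinset.mp hTmem) with hT | hT
    · exact absurd (core hF' hcard' hq' hd' hT hmin) id
    · refine absurd (core (fun w => (hF' w).symm) hcard'.symm (hcard' ▸ hq')
        (fun X hX hX2 => hd' X hX2 hX) hT (fun X hX => hmin X ?_)) id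
      rw [Multiset.mem_add] at hX ⊢; tauto
lemma trivial_of_le [Fintype W] {m : ℕ} (hm : m ≤ Fintype.card K)
    (U V : Fin m → Submodule K W) (h : IsometrySolution U V) : TuplesEquiv U V := by
  set A : Multiset (Submodule K W) := Multiset.map V Finset.univ.val with hA
  set B : Multiset (Submodule K W) := Multiset.map U Finset.univ.val with hB
  have hFmA : ∀ (f : Fin m → Submodule K W) (w : W),
      Fm (Multiset.map f Finset.univ.val) w = ∑ i, trm (f i) w := by
    intro f w
    rw [Fm, Multiset.map_map, Finset.sum_eq_multiset_sum]
    rfl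
  have hF : ∀ w, Fm A w = Fm B w := by
    intro w
    rw [hA, hB, hFmA, hFmA]
    exact h w
  have hcard : Multiset.card A = Multiset.card B := by simp [hA, hB]
  have hq : Multiset.card B ≤ Fintype.card K := by
    simpa [hB] using hm
  have hAB : A = B := multiset_eq hF hcard hq
  -- counts to fiber cardinalities
  have hfib : ∀ S : Submodule K W,
      Fintype.card {i // V i = S} = Fintype.card {i // U i = S} := by
    intro S
    have hc : Multiset.count S A = Multiset.count S B := by rw [hAB]
    rw [hA, hB, Multiset.count_map, Multiset.count_map] at hc
    have hv : ∀ (f : Fin m → Submodule K W),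
        Multiset.card (Multiset.filter (fun a => S = f a) Finset.univ.val) =
          Fintype.card {i // f i = S} := by
      intro f
      rw [Fintype.card_subtype, Finset.card_def, Finset.filter_val]
      congr 1
      apply Multiset.filter_congr
      intro x _
      exact eq_comm
    rw [hv, hv] at hc
    exact hc
  refine ⟨Equiv.ofFiberEquiv (f := V) (g := U)
    (fun S => Fintype.equivOfCardEq (hfib S)), fun i => ?_⟩
  exact (Equiv.ofFiberEquiv_map _ i).symm
lemma exists_nontrivial [Fintype W] (hdim : 1 < Module.finrank K W) {m : ℕ}
    (hm : Fintype.card K + 1 ≤ m) :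
    ∃ U V : Fin m → Submodule K W, IsometrySolution U V ∧ ¬ TuplesEquiv U V := by
  set q := Fintype.card K with hq
  have hq2 : 2 ≤ q := Fintype.one_lt_card
  -- two independent vectors
  obtain ⟨e1, e2, hli⟩ : ∃ e1 e2 : W, LinearIndependent K ![e1, e2] := by
    let b := Module.finBasis K W
    refine ⟨b ⟨0, by omega⟩, b ⟨1, by omega⟩, ?_⟩
    have hinj : Function.Injective (fun i : Fin 2 =>
        (⟨if i = 0 then 0 else 1, by split <;> omega⟩ : Fin (Module.finrank K W))) := by
      intro i j hij
      simp only [Fin.mk.injEq] at hij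
      fin_cases i <;> fin_cases j <;> simp_all
    have := b.linearIndependent.comp _ hinj
    convert this using 1
    funext i
    fin_cases i <;> simp
  have hpair : ∀ s t : K, s • e1 + t • e2 = 0 → s = 0 ∧ t = 0 :=
    LinearIndependent.pair_iff.mp hli
  have he2 : e2 ≠ 0 := by
    intro h
    simpa using (hpair 0 1 (by simp [h])).2
  have heL : ∀ c : K, e1 + c • e2 ≠ 0 := by
    intro c h
    have := (hpair 1 c (by simpa using h)).1
    simp at this
  set P : Submodule K W := Submodule.span K {e1, e2} with hP
  set L : Option K → Submodule K W := fun o => match o with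
    | none => Submodule.span K {e2}
    | some c => Submodule.span K {e1 + c • e2} with hL
  -- cards
  have hcardsub : ∀ X : Submodule K W, (Nat.card ↥X : ℕ) = q ^ Module.finrank K ↥X := by
    intro X
    rw [Nat.card_eq_fintype_card]
    exact Module.card_eq_pow_finrank
  have hrange : Set.range ![e1, e2] = {e1, e2} := by
    ext x
    rw [Set.mem_range]
    constructor
    · rintro ⟨i, rfl⟩; fin_cases i <;> simp
    · rintro (rfl | rfl)
      · exact ⟨0, rfl⟩
      · exact ⟨1, rfl⟩
  have hfP : Module.finrank K ↥P = 2 := by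
    rw [hP, ← hrange, finrank_span_eq_card hli]
    simp
  have hcP : Nat.card ↥P = q ^ 2 := by rw [hcardsub, hfP]
  have hcL : ∀ o, Nat.card ↥(L o) = q := by
    intro o
    have h1 : Module.finrank K ↥(L o) = 1 := by
      cases o with
      | none => exact finrank_span_singleton he2
      | some c => exact finrank_span_singleton (heL c)
    rw [hcardsub, h1, pow_one]
  have hcbot : Nat.card ↥(⊥ : Submodule K W) = 1 := by
    rw [Nat.card_eq_fintype_card]
    simp
  -- lines inside P
  have hLP : ∀ o, L o ≤ P := by
    intro o
    cases o with
    | none => exact Submodule.span_mono (by simp)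
    | some c =>
      rw [hL, hP]
      refine Submodule.span_le.mpr ?_
      rintro x rfl
      exact Submodule.add_mem _ (Submodule.subset_span (by simp))
        (Submodule.smul_mem _ _ (Submodule.subset_span (by simp)))
  have hLn_mem : ∀ w : W, w ∈ L none ↔ ∃ t : K, t • e2 = w := fun w =>
    Submodule.mem_span_singleton
  have hLs_mem : ∀ (c : K) (w : W), w ∈ L (some c) ↔ ∃ t : K, t • (e1 + c • e2) = w :=
    fun c w => Submodule.mem_span_singleton
  have hP_mem : ∀ w : W, w ∈ P ↔ ∃ x y : K, x • e1 + y • e2 = w := fun w =>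
    Submodule.mem_span_pair
  -- index equivalence
  set r := m - (q + 1) with hr
  have hcardι : Fintype.card (Option K ⊕ Fin r) = m := by
    simp [Fintype.card_option, hr]
    omega
  set e : (Option K ⊕ Fin r) ≃ Fin m := Fintype.equivOfCardEq (by rw [hcardι, Fintype.card_fin])
    with he
  set V' : (Option K ⊕ Fin r) → Submodule K W := fun j => match j with
    | Sum.inl o => L o
    | Sum.inr _ => ⊥ with hV'
  set U' : (Option K ⊕ Fin r) → Submodule K W := fun j => match j with
    | Sum.inl none => ⊥
    | Sum.inl (some _) => P
    | Sum.inr _ => ⊥ with hU'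
  have hqR : ((q:ℝ)) ≠ 0 := by positivity
  refine ⟨U' ∘ e.symm, V' ∘ e.symm, ?_, ?_⟩
  · -- solution
    intro w
    have hre : ∀ F : (Option K ⊕ Fin r) → Submodule K W,
        (∑ i : Fin m, ((Nat.card ↥((F ∘ e.symm) i) : ℝ))⁻¹ *
          (if w ∈ (F ∘ e.symm) i then 1 else 0)) =
        ∑ j : Option K ⊕ Fin r, ((Nat.card ↥(F j) : ℝ))⁻¹ * (if w ∈ F j then 1 else 0) := by
      intro F
      exact Equiv.sum_comp e.symm
        (fun j => ((Nat.card ↥(F j) : ℝ))⁻¹ * (if w ∈ F j then 1 else 0))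
    rw [hre V', hre U', Fintype.sum_sum_type, Fintype.sum_sum_type,
      Fintype.sum_option, Fintype.sum_option]
    have hV'bot : ∀ j : Fin r, V' (Sum.inr j) = ⊥ := fun j => rfl
    have hU'bot : ∀ j : Fin r, U' (Sum.inr j) = ⊥ := fun j => rfl
    have hV'l : ∀ o, V' (Sum.inl o) = L o := fun o => rfl
    have hU'n : U' (Sum.inl none) = ⊥ := rfl
    have hU's : ∀ c, U' (Sum.inl (some c)) = P := fun c => rfl
    clear_value V' U' L P
    simp only [hV'bot, hU'bot, hV'l, hU'n, hU's, hcL, hcP, hcbot,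
      Nat.cast_one, inv_one, one_mul]
    by_cases hwP : w ∈ P
    · by_cases hw0 : w = 0
      · have hmem : ∀ X : Submodule K W, w ∈ X := fun X => hw0 ▸ X.zero_mem
        simp only [hmem, if_true, mul_one, Finset.sum_const, Finset.card_univ,
          Fintype.card_fin, nsmul_eq_mul, ← hq]
        have hc2 : ((q^2:ℕ):ℝ) = (q:ℝ)^2 := by push_cast; ring
        rw [hc2]
        field_simp
        ring
      · obtain ⟨x, y, hxy⟩ := (hP_mem w).mp hwP
        have hbot : w ∉ (⊥ : Submodule K W) := by simp [Submodule.mem_bot, hw0]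
        have huniq : ∀ s t : K, s • e1 + t • e2 = w → s = x ∧ t = y := by
          intro s t hst
          have hzero : (s - x) • e1 + (t - y) • e2 = 0 := by
            rw [sub_smul, sub_smul]
            rw [← hxy] at hst
            linear_combination (norm := module) hst
          have h := hpair _ _ hzero
          exact ⟨sub_eq_zero.mp h.1, sub_eq_zero.mp h.2⟩
        have hnotc : ∀ c : K, (w ∈ L (some c)) ↔ (x ≠ 0 ∧ c = x⁻¹ * y) := by
          intro c
          constructor
          · intro hmem
            obtain ⟨t, ht⟩ := (hLs_mem c w).mp hmem
            have ht' : t • e1 + (t * c) • e2 = w := by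
              rw [← ht, smul_add, smul_smul]
            obtain ⟨h1, h2⟩ := huniq _ _ ht'
            have hx : x ≠ 0 := by
              intro hx0
              apply hw0
              rw [← ht, h1, hx0, zero_smul]
            refine ⟨hx, ?_⟩
            have ht0 : t ≠ 0 := by rw [h1]; exact hx
            rw [← h2, ← h1]
            field_simp
          · rintro ⟨hx, rfl⟩
            refine (hLs_mem _ w).mpr ⟨x, ?_⟩
            rw [smul_add, smul_smul, mul_inv_cancel_left₀ hx, hxy]
        have hnotn : (w ∈ L none) ↔ x = 0 := by
          constructor
          · intro hmem
            obtain ⟨t, ht⟩ := (hLn_mem w).mp hmem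
            have ht' : (0:K) • e1 + t • e2 = w := by rw [zero_smul, zero_add, ht]
            exact (huniq _ _ ht').1.symm
          · intro hx
            refine (hLn_mem w).mpr ⟨y, ?_⟩
            rw [← hxy, hx, zero_smul, zero_add]
        by_cases hx : x = 0
        · have h1 : w ∈ L none := hnotn.mpr hx
          have h2 : ∀ c : K, w ∉ L (some c) := fun c hc => ((hnotc c).mp hc).1 hx
          simp only [h1, h2, hbot, hwP, if_true, if_false, mul_one, mul_zero,
            Finset.sum_const_zero, Finset.sum_const, Finset.card_univ, nsmul_eq_mul, ← hq]
          have : ((q^2:ℕ):ℝ) = (q:ℝ)^2 := by push_cast; ring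
          rw [this]
          field_simp
          ring
        · have h1 : w ∉ L none := fun hmem => hx (hnotn.mp hmem)
          have h2 : ∀ c : K, (w ∈ L (some c)) ↔ c = x⁻¹ * y := by
            intro c
            rw [hnotc c]
            exact ⟨fun h => h.2, fun h => ⟨hx, h⟩⟩
          have hsum2 : (∑ c : K, ((q:ℝ))⁻¹ * (if w ∈ L (some c) then 1 else 0)) = (q:ℝ)⁻¹ := by
            have : ∀ c : K, ((q:ℝ))⁻¹ * (if w ∈ L (some c) then 1 else 0) =
                if c = x⁻¹ * y then (q:ℝ)⁻¹ else 0 := by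
              intro c
              by_cases hc : c = x⁻¹ * y <;> simp [h2, hc]
            rw [Finset.sum_congr rfl (fun c _ => this c)]
            rw [Finset.sum_ite_eq' Finset.univ (x⁻¹ * y) (fun _ => ((q:ℝ))⁻¹)]
            simp
          rw [hsum2]
          simp only [h1, hbot, hwP, if_true, if_false, mul_one, mul_zero,
            Finset.sum_const_zero, Finset.sum_const, Finset.card_univ, nsmul_eq_mul, ← hq]
          have : ((q^2:ℕ):ℝ) = (q:ℝ)^2 := by push_cast; ring
          rw [this]
          field_simp
    · have hnL : ∀ o, w ∉ L o := fun o hmem => hwP (hLP o hmem)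
      have hbot : w ∉ (⊥ : Submodule K W) := by
        intro hmem
        exact hwP ((Submodule.mem_bot K).mp hmem ▸ P.zero_mem)
      simp [hnL, hbot, hwP]
  · -- nontrivial
    rintro ⟨π, hπ⟩
    have h0 : (U' ∘ e.symm) (e (Sum.inl (some 0))) = P := by simp [hU']
    set i := π.symm (e (Sum.inl (some 0))) with hi
    have hVi : (V' ∘ e.symm) i = P := by
      have := hπ i
      rw [hi] at this ⊢
      rw [this, Equiv.apply_symm_apply, h0]
    have hfL : ∀ o, Module.finrank K ↥(L o) = 1 := by
      intro o
      cases o with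
      | none => exact finrank_span_singleton he2
      | some c => exact finrank_span_singleton (heL c)
    have hle : Module.finrank K ↥((V' ∘ e.symm) i) ≤ 1 := by
      simp only [Function.comp_apply]
      suffices key : ∀ j', Module.finrank K ↥(V' j') ≤ 1 from key _
      intro j'
      rcases j' with o | j
      · rw [show V' (Sum.inl o) = L o from rfl, hfL o]
      · rw [show V' (Sum.inr j) = ⊥ from rfl]
        simp
    rw [hVi, hfP] at hle
    omega

end Aux

/-- There exists a nontrivial solution of the isometry equation with tuples of length `m`
if and only if `m ≥ |K| + 1`. -/
theorem exists_nontrivial_solution_iff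
    (K W : Type*) [Field K] [Fintype K] [AddCommGroup W] [Module K W]
    [FiniteDimensional K W] (hdim : 1 < Module.finrank K W)
    (m : ℕ) (hm : 0 < m) :
    (∃ U V : Fin m → Submodule K W, IsometrySolution U V ∧ ¬ TuplesEquiv U V) ↔
      m ≥ Fintype.card K + 1 := by
  have hfin : Finite W := Module.finite_of_finite K
  letI : Fintype W := Fintype.ofFinite W
  constructor
  · rintro ⟨U, V, hsol, hne⟩
    by_contra hlt
    push_neg at hlt
    exact hne (trivial_of_le (by omega) U V hsol)
  · intro h
    exact exists_nontrivial hdim h
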